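/- For all x ≥ 0 and κ > 1, Q(x) ≥ π/((π-1)x + √(x²+2π)) · (1/√(2π)) · e^{-x²/2}, where Q is the Gaussian Q-function. -/

import Mathlib

open Real MeasureTheory Set Filter

noncomputable def Qfun (x : ℝ) : ℝ :=
  (1 / Real.sqrt (2 * Real.pi)) * ∫ t in Set.Ioi x, Real.exp (-(t ^ 2) / 2)

namespace Stmt16Aux

noncomputable def f (t : ℝ) : ℝ := Real.exp (-(t ^ 2) / 2)
noncomputable def s (x : ℝ) : ℝ := Real.sqrt (x ^ 2 + 2 * Real.pi)
noncomputable def D (x : ℝ) : ℝ := (Real.pi - 1) * x + s x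
noncomputable def g (x : ℝ) : ℝ := Real.pi / D x
noncomputable def I (x : ℝ) : ℝ := ∫ t in Set.Ioi x, f t
noncomputable def h (x : ℝ) : ℝ := I x - g x * f x

lemma f_eq : f = fun t => Real.exp (-(1/2) * t ^ 2) := by
  funext t; unfold f; congr 1; ring

lemma f_cont : Continuous f := by
  unfold f; continuity

lemma f_pos (t : ℝ) : 0 < f t := Real.exp_pos _

lemma f_int : Integrable f := by
  rw [f_eq]; exact integrable_exp_neg_mul_sq (by norm_num)

lemma sq2pi_pos (x : ℝ) : 0 < x ^ 2 + 2 * Real.pi := by positivity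

lemma s_pos (x : ℝ) : 0 < s x := Real.sqrt_pos.mpr (sq2pi_pos x)

lemma s_sq (x : ℝ) : s x ^ 2 = x ^ 2 + 2 * Real.pi := Real.sq_sqrt (sq2pi_pos x).le

lemma D_pos (x : ℝ) (hx : 0 ≤ x) : 0 < D x := by
  have h1 := s_pos x; have h2 := Real.pi_gt_three; unfold D; nlinarith

lemma I_split (a y : ℝ) (hy : a ≤ y) : I y = I a - ∫ t in a..y, f t := by
  rw [intervalIntegral.integral_of_le hy]
  unfold I
  rw [← Ioc_union_Ioi_eq_Ioi hy,
    setIntegral_union (Ioc_disjoint_Ioi le_rfl) measurableSet_Ioi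
      f_int.integrableOn f_int.integrableOn]
  ring

lemma I_deriv (x : ℝ) : HasDerivAt I (-f x) x := by
  have hd : HasDerivAt (fun y => I (x - 1) - ∫ t in (x - 1)..y, f t) (-f x) x := by
    have h1 := intervalIntegral.integral_hasDerivAt_right
      (f_int.intervalIntegrable (a := x - 1) (b := x))
      (f_cont.stronglyMeasurableAtFilter volume (nhds x)) f_cont.continuousAt
    exact h1.const_sub (I (x - 1))
  apply hd.congr_of_eventuallyEq
  filter_upwards [eventually_gt_nhds (show x - 1 < x by linarith)] with y hy
  exact I_split (x - 1) y hy.le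

lemma s_deriv (x : ℝ) : HasDerivAt s (x / s x) x := by
  have h1 : HasDerivAt (fun y : ℝ => y ^ 2 + 2 * Real.pi) (2 * x) x := by
    simpa using (hasDerivAt_pow 2 x).add_const (2 * Real.pi)
  have h2 := h1.sqrt (sq2pi_pos x).ne'
  convert h2 using 1
  · unfold s; rfl
  unfold s
  rw [eq_div_iff (by have := s_pos x; unfold s at this; positivity)]
  field_simp

lemma D_deriv (x : ℝ) : HasDerivAt D ((Real.pi - 1) + x / s x) x := by
  have h1 : HasDerivAt (fun y : ℝ => (Real.pi - 1) * y) (Real.pi - 1) x := by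
    simpa using (hasDerivAt_id x).const_mul (Real.pi - 1)
  exact h1.add (s_deriv x)

lemma g_deriv (x : ℝ) (hx : 0 ≤ x) :
    HasDerivAt g (-(Real.pi * ((Real.pi - 1) + x / s x)) / D x ^ 2) x := by
  have h1 := (hasDerivAt_const x Real.pi).div (D_deriv x) (D_pos x hx).ne'
  refine h1.congr_deriv ?_
  field_simp
  ring

lemma f_deriv (x : ℝ) : HasDerivAt f (-x * f x) x := by
  have h1 : HasDerivAt (fun y : ℝ => -(y ^ 2) / 2) (-x) x := by
    have h0 := ((hasDerivAt_pow 2 x).neg).div_const 2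
    refine h0.congr_deriv ?_
    ring
  have := h1.exp
  unfold f
  convert this using 1
  ring

lemma h_deriv (x : ℝ) (hx : 0 ≤ x) :
    HasDerivAt h
      ((x * g x - -(Real.pi * ((Real.pi - 1) + x / s x)) / D x ^ 2 - 1) * f x) x := by
  have := (I_deriv x).sub ((g_deriv x hx).mul (f_deriv x))
  refine this.congr_deriv ?_
  ring

lemma key_identity (x : ℝ) (hx : 0 ≤ x) :
    (x * g x - -(Real.pi * ((Real.pi - 1) + x / s x)) / D x ^ 2 - 1) *
      (D x ^ 2 * s x * (x + s x) ^ 2) =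
    2 * Real.pi ^ 2 * ((Real.pi - 3) * s x - x) := by
  have hS := s_pos x
  have hD := D_pos x hx
  have hs2 := s_sq x
  set p := Real.pi with hp
  set S := s x with hSdef
  have hDE : D x = (p - 1) * x + S := rfl
  have hgE : g x = p / ((p - 1) * x + S) := rfl
  rw [hgE, hDE]
  have hDne : (p - 1) * x + S ≠ 0 := by rw [← hDE]; exact hD.ne'
  have hDne' : x * (p - 1) + S ≠ 0 := by rw [mul_comm]; exact hDne
  have expand : x * (p / ((p - 1) * x + S)) -
      -(p * ((p - 1) + x / S)) / ((p - 1) * x + S) ^ 2 - 1 =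
      (p * x * ((p - 1) * x + S) * S + p * ((p - 1) * S + x) -
        ((p - 1) * x + S) ^ 2 * S) / (((p - 1) * x + S) ^ 2 * S) := by
    field_simp
    ring
  rw [expand, div_mul_eq_mul_div]
  rw [div_eq_iff (by positivity)]
  linear_combination ((-3) * S * p + S * p ^ 2 - S ^ 3 - x * p - x * S ^ 2 * p
      + x ^ 2 * S - x ^ 2 * S * p) * (((p - 1) * x + S) ^ 2 * S) * hs2

lemma deriv_sign_nonneg (x : ℝ) (hx : 0 ≤ x) (hψ : x ≤ (Real.pi - 3) * s x) :
    0 ≤ (x * g x - -(Real.pi * ((Real.pi - 1) + x / s x)) / D x ^ 2 - 1) * f x := by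
  have hkey := key_identity x hx
  have hS := s_pos x
  have hD := D_pos x hx
  have hP : 0 < D x ^ 2 * s x * (x + s x) ^ 2 := by positivity
  have hR : 0 ≤ 2 * Real.pi ^ 2 * ((Real.pi - 3) * s x - x) := by
    have := Real.pi_pos; nlinarith
  have hE : 0 ≤ x * g x - -(Real.pi * ((Real.pi - 1) + x / s x)) / D x ^ 2 - 1 := by
    nlinarith [hkey, hP, hR]
  exact mul_nonneg hE (f_pos x).le

lemma deriv_sign_nonpos (x : ℝ) (hx : 0 ≤ x) (hψ : (Real.pi - 3) * s x ≤ x) :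
    (x * g x - -(Real.pi * ((Real.pi - 1) + x / s x)) / D x ^ 2 - 1) * f x ≤ 0 := by
  have hkey := key_identity x hx
  have hS := s_pos x
  have hD := D_pos x hx
  have hP : 0 < D x ^ 2 * s x * (x + s x) ^ 2 := by positivity
  have hR : 2 * Real.pi ^ 2 * ((Real.pi - 3) * s x - x) ≤ 0 := by
    have := Real.pi_pos; nlinarith
  have hE : x * g x - -(Real.pi * ((Real.pi - 1) + x / s x)) / D x ^ 2 - 1 ≤ 0 := by
    nlinarith [hkey, hP, hR]
  exact mul_nonpos_of_nonpos_of_nonneg hE (f_pos x).le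

lemma psi_le (x y : ℝ) (hx : 0 ≤ x) (hxy : x ≤ y) (hψ : (Real.pi - 3) * s x ≤ x) :
    (Real.pi - 3) * s y ≤ y := by
  have h3 := Real.pi_gt_d6
  have h4 := Real.pi_lt_d2
  have hy : 0 ≤ y := hx.trans hxy
  have hsq : ((Real.pi - 3) * s x) ^ 2 ≤ x ^ 2 := by
    have h0 : 0 ≤ (Real.pi - 3) * s x := by
      have := (s_pos x).le; nlinarith
    nlinarith
  rw [mul_pow, s_sq] at hsq
  have hsqy : ((Real.pi - 3) * s y) ^ 2 ≤ y ^ 2 := by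
    rw [mul_pow, s_sq]
    nlinarith [pow_le_pow_left₀ hx hxy 2]
  have h0y : 0 ≤ (Real.pi - 3) * s y := by
    have := (s_pos y).le; nlinarith
  calc (Real.pi - 3) * s y = Real.sqrt (((Real.pi - 3) * s y) ^ 2) :=
        (Real.sqrt_sq h0y).symm
    _ ≤ Real.sqrt (y ^ 2) := Real.sqrt_le_sqrt hsqy
    _ = y := Real.sqrt_sq hy

lemma psi_ge (x y : ℝ) (hy : 0 ≤ y) (hxy : y ≤ x) (hψ : x ≤ (Real.pi - 3) * s x) :
    y ≤ (Real.pi - 3) * s y := by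
  have h3 := Real.pi_gt_d6
  have h4 := Real.pi_lt_d2
  have hx : 0 ≤ x := hy.trans hxy
  have hsq : x ^ 2 ≤ ((Real.pi - 3) * s x) ^ 2 := by
    nlinarith [(s_pos x).le]
  rw [mul_pow, s_sq] at hsq
  have hsqy : y ^ 2 ≤ ((Real.pi - 3) * s y) ^ 2 := by
    rw [mul_pow, s_sq]
    nlinarith [pow_le_pow_left₀ hy hxy 2]
  have h0y : 0 ≤ (Real.pi - 3) * s y := by
    have := (s_pos y).le; nlinarith
  calc y = Real.sqrt (y ^ 2) := (Real.sqrt_sq hy).symm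
    _ ≤ Real.sqrt (((Real.pi - 3) * s y) ^ 2) := Real.sqrt_le_sqrt hsqy
    _ = (Real.pi - 3) * s y := Real.sqrt_sq h0y

lemma h_zero : h 0 = 0 := by
  have h2π : (0 : ℝ) < 2 * Real.pi := by positivity
  have hI0 : I 0 = Real.sqrt (2 * Real.pi) / 2 := by
    have hgauss := integral_gaussian_Ioi (1/2 : ℝ)
    unfold I
    rw [f_eq]
    show ∫ t in Set.Ioi (0:ℝ), Real.exp (-(1/2 : ℝ) * t ^ 2) = Real.sqrt (2 * Real.pi) / 2
    rw [hgauss, show Real.pi / (1/2 : ℝ) = 2 * Real.pi by ring]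
  have hmul : Real.sqrt (2 * Real.pi) * Real.sqrt (2 * Real.pi) = 2 * Real.pi :=
    Real.mul_self_sqrt h2π.le
  have hgv : Real.pi / Real.sqrt (2 * Real.pi) = Real.sqrt (2 * Real.pi) / 2 := by
    rw [div_eq_div_iff (by positivity) (by norm_num)]
    linarith
  unfold h g D s f
  rw [hI0]
  rw [show ((0:ℝ) ^ 2 + 2 * Real.pi) = 2 * Real.pi by norm_num]
  rw [show (Real.pi - 1) * (0:ℝ) + Real.sqrt (2 * Real.pi) = Real.sqrt (2 * Real.pi) by ring]
  rw [show -((0:ℝ) ^ 2) / 2 = 0 by norm_num, Real.exp_zero, mul_one, hgv, sub_self]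

lemma I_tendsto : Tendsto I atTop (nhds 0) := by
  have h1 : Tendsto (fun y => ∫ t in (0:ℝ)..y, f t) atTop (nhds (I 0)) :=
    intervalIntegral_tendsto_integral_Ioi 0 f_int.integrableOn tendsto_id
  have h2 : ∀ᶠ y in atTop, I 0 - ∫ t in (0:ℝ)..y, f t = I y := by
    filter_upwards [eventually_ge_atTop (0:ℝ)] with y hy
    rw [I_split 0 y hy]
  have h3 : Tendsto (fun y => I 0 - ∫ t in (0:ℝ)..y, f t) atTop (nhds (I 0 - I 0)) :=
    tendsto_const_nhds.sub h1
  rw [sub_self] at h3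
  exact Tendsto.congr' h2 h3

lemma h_tendsto : Tendsto h atTop (nhds 0) := by
  have hf0 : Tendsto f atTop (nhds 0) := by
    rw [f_eq]
    have h1 : Tendsto (fun y : ℝ => y ^ 2) atTop atTop := by
      exact tendsto_pow_atTop (by norm_num)
    have h2 : Tendsto (fun y : ℝ => -(1/2 : ℝ) * y ^ 2) atTop atBot := by
      apply Tendsto.const_mul_atTop_of_neg (by norm_num) h1
    exact Real.tendsto_exp_atBot.comp h2
  have hgf : Tendsto (fun y => g y * f y) atTop (nhds 0) := by
    apply squeeze_zero' (g := fun y => Real.pi * f y)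
    · filter_upwards [eventually_ge_atTop (0:ℝ)] with y hy
      exact mul_nonneg (div_nonneg Real.pi_pos.le (D_pos y hy).le) (f_pos y).le
    · filter_upwards [eventually_ge_atTop (0:ℝ)] with y hy
      have hD1 : (1:ℝ) ≤ D y := by
        have hs := s_pos y
        have hs1 : (1:ℝ) ≤ s y := by
          rw [show (1:ℝ) = Real.sqrt 1 by simp]
          apply Real.sqrt_le_sqrt
          nlinarith [Real.pi_gt_three]
        have := Real.pi_gt_three
        unfold D
        nlinarith
      have hg1 : g y ≤ Real.pi := by
        unfold g
        rw [div_le_iff₀ (by linarith [D_pos y hy])]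
        nlinarith [Real.pi_pos]
      have hg0 : 0 ≤ g y := div_nonneg Real.pi_pos.le (D_pos y hy).le
      exact mul_le_mul_of_nonneg_right hg1 (f_pos y).le
    · have := hf0.const_mul Real.pi
      simpa using this
  have := I_tendsto.sub hgf
  rw [sub_self] at this
  exact this

lemma h_nonneg (x : ℝ) (hx : 0 ≤ x) : 0 ≤ h x := by
  rcases le_total x ((Real.pi - 3) * s x) with hψ | hψ
  · -- h monotone on [0, x], h 0 = 0
    have hmono : MonotoneOn h (Icc 0 x) := by
      apply monotoneOn_of_deriv_nonneg (convex_Icc 0 x)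
      · intro y hy
        exact (h_deriv y hy.1).continuousAt.continuousWithinAt
      · intro y hy
        rw [interior_Icc] at hy
        exact (h_deriv y hy.1.le).differentiableAt.differentiableWithinAt
      · intro y hy
        rw [interior_Icc] at hy
        rw [(h_deriv y hy.1.le).deriv]
        exact deriv_sign_nonneg y hy.1.le (psi_ge x y hy.1.le hy.2.le hψ)
    have := hmono (left_mem_Icc.mpr hx) (right_mem_Icc.mpr hx) hx
    rw [h_zero] at this
    exact this
  · -- h antitone on [x, ∞), limit 0
    have hanti : AntitoneOn h (Ici x) := by
      apply antitoneOn_of_deriv_nonpos (convex_Ici x)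
      · intro y hy
        exact (h_deriv y (hx.trans hy)).continuousAt.continuousWithinAt
      · intro y hy
        rw [interior_Ici] at hy
        exact (h_deriv y (hx.trans hy.le)).differentiableAt.differentiableWithinAt
      · intro y hy
        rw [interior_Ici] at hy
        rw [(h_deriv y (hx.trans hy.le)).deriv]
        exact deriv_sign_nonpos y (hx.trans hy.le) (psi_le x y hx hy.le hψ)
    apply le_of_tendsto h_tendsto
    filter_upwards [eventually_ge_atTop x] with y hy
    exact hanti (Set.self_mem_Ici) hy hy

end Stmt16Aux

theorem stmt16 (x κ : ℝ) (hx : 0 ≤ x) (hκ : 1 < κ) :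
    Qfun x ≥ Real.pi / ((Real.pi - 1) * x + Real.sqrt (x ^ 2 + 2 * Real.pi)) *
      (1 / Real.sqrt (2 * Real.pi)) * Real.exp (-(x ^ 2) / 2) := by
  have hkey := Stmt16Aux.h_nonneg x hx
  unfold Stmt16Aux.h Stmt16Aux.I Stmt16Aux.g Stmt16Aux.D Stmt16Aux.s Stmt16Aux.f at hkey
  have hpos : (0:ℝ) < 1 / Real.sqrt (2 * Real.pi) := by positivity
  unfold Qfun
  have h1 : Real.pi / ((Real.pi - 1) * x + Real.sqrt (x ^ 2 + 2 * Real.pi)) *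
      Real.exp (-(x ^ 2) / 2) ≤ ∫ t in Set.Ioi x, Real.exp (-(t ^ 2) / 2) := by
    linarith
  calc Real.pi / ((Real.pi - 1) * x + Real.sqrt (x ^ 2 + 2 * Real.pi)) *
        (1 / Real.sqrt (2 * Real.pi)) * Real.exp (-(x ^ 2) / 2)
      = (1 / Real.sqrt (2 * Real.pi)) *
        (Real.pi / ((Real.pi - 1) * x + Real.sqrt (x ^ 2 + 2 * Real.pi)) *
          Real.exp (-(x ^ 2) / 2)) := by ring
    _ ≤ (1 / Real.sqrt (2 * Real.pi)) * ∫ t in Set.Ioi x, Real.exp (-(t ^ 2) / 2) :=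
        mul_le_mul_of_nonneg_left h1 hpos.le
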